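/- arXiv:0801.4847 — 3 statements merged into one kernel-verified Lean document; each statement's English description precedes it below -/
import Mathlib

section
/- Let V be a 2n-dimensional vector space with basis x_1,y_1,...,x_n,y_n over a field k of characteristic zero, and ω = Σ x_i∧y_i. Then the element y_1∧y_2∧...∧y_n ∈ Λ^n V does not lie in the subspace x_1∧Λ^{n-1}V + ω∧Λ^{n-2}V. -/
open ExteriorAlgebra

/-- `y₁ ∧ … ∧ yₙ ∈ Λⁿ V` does not lie in `x₁ ∧ Λ^{n-1} V + ω ∧ Λ^{n-2} V`,
where `ω = Σ xᵢ ∧ yᵢ`. -/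
theorem stmt_2 {k V : Type*} [Field k] [CharZero k] [AddCommGroup V] [Module k V]
    {n : ℕ} (hn : 0 < n) (b : Module.Basis (Fin n ⊕ Fin n) k V)
    (x y : Fin n → V)
    (hx : ∀ i, x i = b (Sum.inl i)) (hy : ∀ i, y i = b (Sum.inr i))
    (ω : ExteriorAlgebra k V)
    (hω : ω = ∑ i : Fin n, ι k (x i) * ι k (y i)) :
    ¬ ∃ η ∈ (LinearMap.range (ι k : V →ₗ[k] ExteriorAlgebra k V) ^ (n - 1) :
          Submodule k (ExteriorAlgebra k V)),
        ∃ β ∈ (LinearMap.range (ι k : V →ₗ[k] ExteriorAlgebra k V) ^ (n - 2) :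
          Submodule k (ExteriorAlgebra k V)),
        (List.ofFn fun i : Fin n => ι k (y i)).prod = ι k (x ⟨0, hn⟩) * η + ω * β := by
  rintro ⟨η, -, β, -, heq⟩
  -- the linear map killing the `x`'s and fixing the `y`'s
  have : Fintype (Fin n ⊕ Fin n) := inferInstance
  set f : V →ₗ[k] V := b.constr k (Sum.elim (fun _ => (0 : V)) (fun i => b (Sum.inr i))) with hf
  have hfx : ∀ i, f (x i) = 0 := by
    intro i; rw [hx, hf, Module.Basis.constr_basis]; rfl
  have hfy : ∀ i, f (y i) = y i := by
    intro i; rw [hy, hf, Module.Basis.constr_basis]; rfl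
  have happ := congrArg (ExteriorAlgebra.map f) heq
  rw [map_add, map_mul, map_mul, map_apply_ι, hfx, map_zero, zero_mul, hω, map_sum] at happ
  simp only [map_mul, map_apply_ι, hfx, map_zero, zero_mul, Finset.sum_const_zero,
    zero_add] at happ
  have hprod : ExteriorAlgebra.map f ((List.ofFn fun i : Fin n => ι k (y i)).prod)
      = (List.ofFn fun i : Fin n => ι k (y i)).prod := by
    rw [← ιMulti_apply, map_apply_ιMulti]
    congr 1
    funext i
    simp [hfy]
  rw [hprod] at happ
  -- now `happ : ∏ ι (y i) = 0`; derive a contradiction using an alternating form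
  set p : V →ₗ[k] (Fin n → k) :=
    (LinearMap.funLeft k k Sum.inr) ∘ₗ b.equivFun.toLinearMap with hp
  set D : V [⋀^Fin n]→ₗ[k] k :=
    (Matrix.detRowAlternating : (Fin n → k) [⋀^Fin n]→ₗ[k] k).compLinearMap p with hD
  set F := liftAlternating (R := k) (M := V) (N := k) (Pi.single n D) with hF
  have hFy : F ((List.ofFn fun i : Fin n => ι k (y i)).prod) = 1 := by
    rw [← ιMulti_apply, hF, liftAlternating_apply_ιMulti, Pi.single_eq_same, hD]
    have hmat : (fun i => p (y i)) = (1 : Matrix (Fin n) (Fin n) k) := by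
      funext i j
      simp only [hp, LinearMap.coe_comp, Function.comp_apply, LinearMap.funLeft_apply,
        LinearEquiv.coe_coe, hy, Module.Basis.equivFun_self, Matrix.one_apply]
      by_cases h : i = j <;> simp [h, Sum.inr.injEq]
    show Matrix.detRowAlternating (fun i => p (y i)) = 1
    rw [hmat]
    exact Matrix.det_one
  rw [happ, map_zero] at hFy
  exact zero_ne_one hFy
end

section
/- Let E = Λ(x_1, x_2, y_1, y_2, z) be the exterior algebra on five generators over a field k of characteristic zero, and set θ_1 = x_1∧y_1 + x_2∧z, θ_2 = x_2∧y_2 + x_1∧z. Suppose ξ, η ∈ E^1 with ξ ≠ 0 and η∧ξ = a·θ_1 + b·θ_2 for some a, b ∈ k. Then a = b = 0 and η is a scalar multiple of ξ. -/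
open ExteriorAlgebra


noncomputable def coordPair {k E1 : Type*} [Field k] [AddCommGroup E1] [Module k E1]
    (ci cj : E1 →ₗ[k] k) : E1 [⋀^Fin 2]→ₗ[k] k :=
  (Matrix.detRowAlternating).compLinearMap (LinearMap.pi ![ci, cj])

lemma coordPair_apply {k E1 : Type*} [Field k] [AddCommGroup E1] [Module k E1]
    (ci cj : E1 →ₗ[k] k) (v w : E1) :
    coordPair ci cj ![v, w] = ci v * cj w - cj v * ci w := by
  have : coordPair ci cj ![v, w]
      = Matrix.det (Matrix.of fun i => (LinearMap.pi ![ci, cj]) (![v, w] i)) := rfl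
  rw [this, Matrix.det_fin_two]
  simp [Matrix.of_apply]

noncomputable def lam {k E1 : Type*} [Field k] [AddCommGroup E1] [Module k E1]
    (ci cj : E1 →ₗ[k] k) : ExteriorAlgebra k E1 →ₗ[k] k :=
  liftAlternating (fun n => match n with | 2 => coordPair ci cj | _ => 0)

lemma lam_ι_mul {k E1 : Type*} [Field k] [AddCommGroup E1] [Module k E1]
    (ci cj : E1 →ₗ[k] k) (v w : E1) :
    lam ci cj (ι k v * ι k w) = ci v * cj w - cj v * ci w := by
  rw [lam, liftAlternating_ι_mul, liftAlternating_ι]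
  exact coordPair_apply ci cj v w

set_option maxHeartbeats 1600000 in
/-- In `E = Λ(x₁,x₂,y₁,y₂,z)` with `θ₁ = x₁∧y₁ + x₂∧z`,
`θ₂ = x₂∧y₂ + x₁∧z`, if `ξ ≠ 0` and `η ∧ ξ = a•θ₁ + b•θ₂`, then `a = b = 0` and
`η` is a scalar multiple of `ξ`.  (Here `x₁,x₂,y₁,y₂,z` is a basis of the degree-1
part `E¹`, and `ξ, η ∈ E¹`.) -/
theorem stmt_14 {k E1 : Type*} [Field k] [CharZero k] [AddCommGroup E1] [Module k E1]
    (e : Module.Basis (Fin 5) k E1)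
    (x₁ x₂ y₁ y₂ z : E1)
    (hx₁ : x₁ = e 0) (hx₂ : x₂ = e 1) (hy₁ : y₁ = e 2) (hy₂ : y₂ = e 3) (hz : z = e 4)
    (θ₁ θ₂ : ExteriorAlgebra k E1)
    (hθ₁ : θ₁ = ι k x₁ * ι k y₁ + ι k x₂ * ι k z)
    (hθ₂ : θ₂ = ι k x₂ * ι k y₂ + ι k x₁ * ι k z)
    (ξ η : E1) (hξ : ξ ≠ 0) (a b : k)
    (h : ι k η * ι k ξ = a • θ₁ + b • θ₂) :
    a = 0 ∧ b = 0 ∧ ∃ c : k, η = c • ξ := by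
  set p : Fin 5 → k := fun i => e.repr η i with hp
  set q : Fin 5 → k := fun i => e.repr ξ i with hq
  have key : ∀ i j : Fin 5,
      p i * q j - p j * q i =
      a * ((e.coord i) (e 0) * (e.coord j) (e 2) - (e.coord j) (e 0) * (e.coord i) (e 2)
         + ((e.coord i) (e 1) * (e.coord j) (e 4) - (e.coord j) (e 1) * (e.coord i) (e 4)))
      + b * ((e.coord i) (e 1) * (e.coord j) (e 3) - (e.coord j) (e 1) * (e.coord i) (e 3)
         + ((e.coord i) (e 0) * (e.coord j) (e 4) - (e.coord j) (e 0) * (e.coord i) (e 4))) := by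
    intro i j
    have := congrArg (lam (e.coord i) (e.coord j)) h
    simp only [hθ₁, hθ₂, hx₁, hx₂, hy₁, hy₂, hz, map_add, map_smul, lam_ι_mul,
      smul_eq_mul] at this
    simpa [hp, hq, Module.Basis.coord_apply] using this
  have coord_self : ∀ i j : Fin 5, (e.coord i) (e j) = if j = i then 1 else 0 := by
    intro i j
    simp [Module.Basis.coord_apply, Module.Basis.repr_self, Finsupp.single_apply]
  -- extract the ten equations
  have h01 := key 0 1; have h02 := key 0 2; have h03 := key 0 3; have h04 := key 0 4
  have h12 := key 1 2; have h13 := key 1 3; have h14 := key 1 4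
  have h23 := key 2 3; have h24 := key 2 4; have h34 := key 3 4
  have v0 : ((0:Fin 5):ℕ) = 0 := rfl
  have v1 : ((1:Fin 5):ℕ) = 1 := rfl
  have v2 : ((2:Fin 5):ℕ) = 2 := rfl
  have v3 : ((3:Fin 5):ℕ) = 3 := rfl
  have v4 : ((4:Fin 5):ℕ) = 4 := rfl
  simp only [coord_self, Fin.ext_iff] at h01 h02 h03 h04 h12 h13 h14 h23 h24 h34
  norm_num [v0, v1, v2, v3, v4] at h01 h02 h03 h04 h12 h13 h14 h23 h24 h34
  -- h02 : p0 q2 - p2 q0 = a, h14 : ... = a, h13 = b, h04 = b, rest = 0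
  have ha : a = 0 := by
    have : a * a = 0 := by linear_combination (-(p 1 * q 4 - p 4 * q 1)) * h02 - a * h14
      + (p 2 * q 4 - p 4 * q 2) * h01 + (p 0 * q 4 - p 4 * q 0) * h12
    exact mul_self_eq_zero.mp this
  have hb : b = 0 := by
    have : b * b = 0 := by linear_combination (-(p 1 * q 3 - p 3 * q 1)) * h04 - b * h13
      + (p 1 * q 4 - p 4 * q 1) * h03 - (p 3 * q 4 - p 4 * q 3) * h01
    exact mul_self_eq_zero.mp this
  subst ha hb
  refine ⟨rfl, rfl, ?_⟩
  have hm : ∀ i j : Fin 5, p i * q j = p j * q i := by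
    intro i j
    have hfin : ∀ (n : ℕ) (hn : n < 5), (⟨n, hn⟩ : Fin 5) = (open Fin.NatCast in ((n : ℕ) : Fin 5)) := fun n hn => by
      simp [Fin.ext_iff, Nat.mod_eq_of_lt hn, Fin.val_natCast]
    fin_cases i <;> fin_cases j <;>
      simp only [hfin, Nat.cast_ofNat, Nat.cast_zero, Nat.cast_one] <;>
      first
        | ring1
        | linear_combination h01 | linear_combination -h01
        | linear_combination h02 | linear_combination -h02
        | linear_combination h03 | linear_combination -h03
        | linear_combination h04 | linear_combination -h04
        | linear_combination h12 | linear_combination -h12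
        | linear_combination h13 | linear_combination -h13
        | linear_combination h14 | linear_combination -h14
        | linear_combination h23 | linear_combination -h23
        | linear_combination h24 | linear_combination -h24
        | linear_combination h34 | linear_combination -h34
  obtain ⟨i₀, hq0⟩ : ∃ i, q i ≠ 0 := by
    by_contra hc
    push_neg at hc
    apply hξ
    have : e.repr ξ = 0 := by
      ext i; exact hc i
    simpa using congrArg e.repr.symm this
  refine ⟨p i₀ / q i₀, ?_⟩
  apply e.repr.injective
  ext i
  have := hm i i₀
  rw [map_smul]
  simp only [Finsupp.smul_apply, smul_eq_mul]
  show p i = (p i₀ / q i₀) * q i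
  field_simp
  linear_combination hm i i₀
end

section
/- Let V be a 2n-dimensional vector space over a field k of characteristic zero with basis x_1,y_1,...,x_n,y_n and ω = Σ x_i∧y_i. Then the quotient Λ^n V / (ω ∧ Λ^{n-2}V) is nonzero; in particular the image of y_1∧...∧y_n is nonzero in this quotient, i.e., y_1∧...∧y_n ∉ ω∧Λ^{n-2}V. -/
open ExteriorAlgebra

/-- `y₁ ∧ … ∧ yₙ ∉ ω ∧ Λ^{n-2} V`, where `ω = Σ xᵢ ∧ yᵢ`; in particular
the quotient `Λⁿ V / (ω ∧ Λ^{n-2} V)` is nonzero (so `Hⁿ(H_n) ≠ 0`). -/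
theorem stmt_19 {k V : Type*} [Field k] [CharZero k] [AddCommGroup V] [Module k V]
    {n : ℕ} (hn : 0 < n) (b : Module.Basis (Fin n ⊕ Fin n) k V)
    (x y : Fin n → V)
    (hx : ∀ i, x i = b (Sum.inl i)) (hy : ∀ i, y i = b (Sum.inr i))
    (ω : ExteriorAlgebra k V)
    (hω : ω = ∑ i : Fin n, ι k (x i) * ι k (y i)) :
    (List.ofFn fun i : Fin n => ι k (y i)).prod ∉
      Submodule.map (LinearMap.mulLeft k ω)
        (LinearMap.range (ι k : V →ₗ[k] ExteriorAlgebra k V) ^ (n - 2) :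
          Submodule k (ExteriorAlgebra k V)) := by
  -- the projection killing the `x` part
  set g : V →ₗ[k] V := b.constr k (Sum.elim (fun _ => 0) (fun i => b (Sum.inr i))) with hg
  have hgx : ∀ i, g (x i) = 0 := by
    intro i; rw [hx i, hg, Module.Basis.constr_basis]; rfl
  have hgy : ∀ i, g (y i) = y i := by
    intro i; rw [hy i, hg, Module.Basis.constr_basis]; rfl
  -- the induced algebra map
  set φ : ExteriorAlgebra k V →ₐ[k] ExteriorAlgebra k V := ExteriorAlgebra.map g with hφ
  have hφω : φ ω = 0 := by
    rw [hω, map_sum]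
    refine Finset.sum_eq_zero fun i _ => ?_
    rw [map_mul, hφ, ExteriorAlgebra.map_apply_ι, hgx, map_zero, zero_mul]
  have hφy : φ ((List.ofFn fun i : Fin n => ι k (y i)).prod)
      = (List.ofFn fun i : Fin n => ι k (y i)).prod := by
    rw [map_list_prod]
    congr 1
    simp only [List.map_ofFn]
    refine congrArg _ (funext fun i => ?_)
    simp [hφ, ExteriorAlgebra.map_apply_ι, hgy]
  rintro ⟨m, -, hm⟩
  have hzero : (List.ofFn fun i : Fin n => ι k (y i)).prod = 0 := by
    have h := congrArg φ hm
    rw [LinearMap.mulLeft_apply, map_mul, hφω, zero_mul, hφy] at h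
    exact h.symm
  -- but the wedge of the `y`'s is nonzero, via an alternating map
  set π : V →ₗ[k] (Fin n → k) := LinearMap.pi (fun i => b.coord (Sum.inr i)) with hπ
  set F : V [⋀^Fin n]→ₗ[k] k :=
    ((Pi.basisFun k (Fin n)).det).compLinearMap π with hF
  have hπy : (fun j => π (y j)) = ⇑(Pi.basisFun k (Fin n)) := by
    funext j
    ext i
    simp [hπ, hy, Finsupp.single_apply, Pi.single_apply, eq_comm]
  have hFy : F y = 1 := by
    rw [hF, AlternatingMap.compLinearMap_apply]
    show (Pi.basisFun k (Fin n)).det (fun j => π (y j)) = 1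
    rw [hπy, Module.Basis.det_self]
  set f : ∀ i, V [⋀^Fin i]→ₗ[k] k := Function.update (fun _ => 0) n F with hf
  have h1 : ExteriorAlgebra.liftAlternating f (ιMulti k n y) = 1 := by
    rw [ExteriorAlgebra.liftAlternating_apply_ιMulti, hf, Function.update_self, hFy]
  rw [← ExteriorAlgebra.ιMulti_apply] at hzero
  rw [hzero, map_zero] at h1
  exact zero_ne_one h1
end
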